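/- With ω(t,z) = K e^z Φ(z/√t + (r+1/2)√t) − K e^{−rt} Φ(z/√t + (r−1/2)√t) and K, r > 0: for every fixed z ∈ ℝ, lim_{t→0⁺} ω(t,z) = max(K e^z − K, 0). -/

import Mathlib

open Real Filter Topology

/-- The standard normal cumulative distribution function. -/
noncomputable def stdNormalCDF (x : ℝ) : ℝ :=
  (Real.sqrt (2 * Real.pi))⁻¹ * ∫ y in Set.Iio x, Real.exp (-y ^ 2 / 2)

lemma gauss_eq : (fun y : ℝ => Real.exp (-y ^ 2 / 2)) = fun y => Real.exp (-(1/2 : ℝ) * y ^ 2) := by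
  funext y; ring_nf

lemma gauss_integrable : MeasureTheory.Integrable (fun y : ℝ => Real.exp (-y ^ 2 / 2)) := by
  rw [gauss_eq]; exact integrable_exp_neg_mul_sq (by norm_num)

lemma gauss_total : ∫ y : ℝ, Real.exp (-y ^ 2 / 2) = Real.sqrt (2 * Real.pi) := by
  rw [gauss_eq, integral_gaussian]
  rw [show Real.pi / (1/2) = 2 * Real.pi by ring]

lemma sqrt2pi_pos : 0 < Real.sqrt (2 * Real.pi) :=
  Real.sqrt_pos.2 (by positivity)

lemma stdNormalCDF_tendsto_atTop : Tendsto stdNormalCDF atTop (𝓝 1) := by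
  have h : Tendsto (fun x : ℝ => ∫ y in Set.Iio x, Real.exp (-y ^ 2 / 2)) atTop
      (𝓝 (∫ y in ⋃ x : ℝ, Set.Iio x, Real.exp (-y ^ 2 / 2))) :=
    MeasureTheory.tendsto_setIntegral_of_monotone (fun _ => measurableSet_Iio)
      (fun a b hab => Set.Iio_subset_Iio hab)
      (gauss_integrable.integrableOn)
  rw [Set.iUnion_Iio, MeasureTheory.Measure.restrict_univ, gauss_total] at h
  have h2 := h.const_mul (Real.sqrt (2 * Real.pi))⁻¹
  rw [inv_mul_cancel₀ sqrt2pi_pos.ne'] at h2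
  exact h2

lemma stdNormalCDF_tendsto_atBot : Tendsto stdNormalCDF atBot (𝓝 0) := by
  have h : Tendsto (fun x : ℝ => ∫ y in Set.Iio (-x), Real.exp (-y ^ 2 / 2)) atTop
      (𝓝 (∫ y in ⋂ x : ℝ, Set.Iio (-x), Real.exp (-y ^ 2 / 2))) :=
    MeasureTheory.tendsto_setIntegral_of_antitone (fun _ => measurableSet_Iio)
      (fun a b hab => Set.Iio_subset_Iio (by linarith))
      ⟨0, gauss_integrable.integrableOn⟩
  have hempty : (⋂ x : ℝ, Set.Iio (-x)) = (∅ : Set ℝ) := by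
    ext y
    simp only [Set.mem_iInter, Set.mem_Iio, Set.mem_empty_iff_false, iff_false, not_forall, not_lt]
    exact ⟨-y, by linarith⟩
  rw [hempty, MeasureTheory.Measure.restrict_empty, MeasureTheory.integral_zero_measure] at h
  have h2 : Tendsto (fun x : ℝ => stdNormalCDF (-x)) atTop (𝓝 0) := by
    have := h.const_mul (Real.sqrt (2 * Real.pi))⁻¹
    simpa [stdNormalCDF] using this
  refine Tendsto.congr (fun x => ?_) (h2.comp (tendsto_neg_atBot_atTop (G := ℝ)))
  simp [Function.comp]

lemma stdNormalCDF_continuous : Continuous stdNormalCDF := by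
  have h : ∀ x : ℝ, stdNormalCDF x =
      (Real.sqrt (2 * Real.pi))⁻¹ * ((∫ y in Set.Iic (0:ℝ), Real.exp (-y ^ 2 / 2))
        + ∫ y in (0:ℝ)..x, Real.exp (-y ^ 2 / 2)) := by
    intro x
    rw [stdNormalCDF, ← MeasureTheory.integral_Iic_eq_integral_Iio,
      ← intervalIntegral.integral_Iic_sub_Iic gauss_integrable.integrableOn
        gauss_integrable.integrableOn]
    ring
  simp only [funext h]
  exact continuous_const.mul (continuous_const.add
    (intervalIntegral.continuous_primitive (fun a b => gauss_integrable.intervalIntegrable) 0))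

lemma stdNormalCDF_zero : stdNormalCDF 0 = 1 / 2 := by
  have h1 : ∫ y in Set.Iio (0:ℝ), Real.exp (-y ^ 2 / 2)
      = ∫ y in Set.Ioi (0:ℝ), Real.exp (-y ^ 2 / 2) := by
    rw [← MeasureTheory.integral_Iic_eq_integral_Iio,
      show (0:ℝ) = -0 by norm_num, ← integral_comp_neg_Ioi]
    simp [neg_sq]
  have h2 : ∫ y in Set.Ioi (0:ℝ), Real.exp (-y ^ 2 / 2) = Real.sqrt (2 * Real.pi) / 2 := by
    rw [gauss_eq, integral_gaussian_Ioi,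
      show Real.pi / (1/2) = 2 * Real.pi by ring]
  rw [stdNormalCDF, h1, h2]
  field_simp

lemma sqrt_tendsto : Tendsto (fun t : ℝ => Real.sqrt t) (nhdsWithin 0 (Set.Ioi 0))
    (nhdsWithin 0 (Set.Ioi 0)) := by
  apply tendsto_nhdsWithin_of_tendsto_nhds_of_eventually_within
  · have := Real.continuous_sqrt.continuousAt (x := (0:ℝ))
    simpa [Real.sqrt_zero] using this.continuousWithinAt.tendsto
  · filter_upwards [self_mem_nhdsWithin] with t ht
    exact Set.mem_Ioi.2 (Real.sqrt_pos.2 ht)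

/-- The log-price Black–Scholes solution satisfies the terminal condition
`ω(t,z) → max(K e^z − K, 0)` as `t → 0⁺`. -/
theorem logPrice_blackScholes_initial (K r : ℝ) (hK : 0 < K) (hr : 0 < r)
    (ω : ℝ → ℝ → ℝ)
    (hω : ∀ t z, ω t z =
      K * Real.exp z * stdNormalCDF (z / Real.sqrt t + (r + 1 / 2) * Real.sqrt t)
      - K * Real.exp (-r * t) * stdNormalCDF (z / Real.sqrt t + (r - 1 / 2) * Real.sqrt t)) :
    ∀ z : ℝ, Tendsto (fun t => ω t z) (nhdsWithin 0 (Set.Ioi 0))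
      (nhds (max (K * Real.exp z - K) 0)) := by
  intro z
  have hexp : Tendsto (fun t : ℝ => Real.exp (-r * t)) (nhdsWithin 0 (Set.Ioi 0)) (𝓝 1) := by
    have h : ContinuousAt (fun t : ℝ => Real.exp (-r * t)) 0 := by fun_prop
    have h2 := (h.tendsto).mono_left (nhdsWithin_le_nhds (s := Set.Ioi (0:ℝ)))
    simpa using h2
  have hsqrt0 : Tendsto (fun t : ℝ => Real.sqrt t) (nhdsWithin 0 (Set.Ioi 0)) (𝓝 0) :=
    sqrt_tendsto.mono_right nhdsWithin_le_nhds
  have hinv : Tendsto (fun t : ℝ => (Real.sqrt t)⁻¹) (nhdsWithin 0 (Set.Ioi 0)) atTop :=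
    tendsto_inv_nhdsGT_zero.comp sqrt_tendsto
  -- the two cdf arguments
  have harg : ∀ c : ℝ, (fun t : ℝ => z / Real.sqrt t + c * Real.sqrt t)
      = fun t => z * (Real.sqrt t)⁻¹ + c * Real.sqrt t := by
    intro c; funext t; rw [div_eq_mul_inv]
  rcases lt_trichotomy z 0 with hz | hz | hz
  · -- z < 0 : cdf args → atBot, limit 0
    have hmax : max (K * Real.exp z - K) 0 = 0 := by
      apply max_eq_right
      nlinarith [Real.exp_lt_one_iff.2 hz, hK.le]
    have hargs : ∀ c : ℝ, Tendsto (fun t : ℝ => z / Real.sqrt t + c * Real.sqrt t)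
        (nhdsWithin 0 (Set.Ioi 0)) atBot := by
      intro c
      rw [harg]
      exact Filter.Tendsto.atBot_add (hinv.const_mul_atTop_of_neg hz)
        (hsqrt0.const_mul c)
    rw [hmax]
    have h1 := stdNormalCDF_tendsto_atBot.comp (hargs (r + 1/2))
    have h2 := stdNormalCDF_tendsto_atBot.comp (hargs (r - 1/2))
    have := ((tendsto_const_nhds (x := K * Real.exp z)).mul h1).sub
      ((((tendsto_const_nhds (x := K)).mul hexp)).mul h2)
    simp only [Function.comp] at this
    refine Tendsto.congr (fun t => ?_) (by simpa using this)
    rw [hω]; ring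
  · -- z = 0 : cdf args → 0, limit 0
    subst hz
    have hmax : max (K * Real.exp 0 - K) 0 = 0 := by simp
    have hargs : ∀ c : ℝ, Tendsto (fun t : ℝ => (0:ℝ) / Real.sqrt t + c * Real.sqrt t)
        (nhdsWithin 0 (Set.Ioi 0)) (𝓝 0) := by
      intro c
      simpa using (hsqrt0.const_mul c)
    rw [hmax]
    have hcdf0 : Tendsto stdNormalCDF (𝓝 (0:ℝ)) (𝓝 (1/2)) := by
      have := stdNormalCDF_continuous.continuousAt (x := (0:ℝ))
      rwa [ContinuousAt, stdNormalCDF_zero] at this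
    have h1 := hcdf0.comp (hargs (r + 1/2))
    have h2 := hcdf0.comp (hargs (r - 1/2))
    have := ((tendsto_const_nhds (x := K)).mul h1).sub
      ((((tendsto_const_nhds (x := K)).mul hexp)).mul h2)
    simp only [Function.comp] at this
    refine Tendsto.congr (fun t => ?_) (by simpa using this)
    rw [hω, Real.exp_zero]; ring
  · -- z > 0 : cdf args → atTop, limit K e^z - K
    have hmax : max (K * Real.exp z - K) 0 = K * Real.exp z - K := by
      apply max_eq_left
      nlinarith [Real.one_lt_exp_iff.2 hz, hK.le]
    have hargs : ∀ c : ℝ, Tendsto (fun t : ℝ => z / Real.sqrt t + c * Real.sqrt t)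
        (nhdsWithin 0 (Set.Ioi 0)) atTop := by
      intro c
      rw [harg]
      exact Filter.Tendsto.atTop_add (hinv.const_mul_atTop hz)
        (hsqrt0.const_mul c)
    rw [hmax]
    have h1 := stdNormalCDF_tendsto_atTop.comp (hargs (r + 1/2))
    have h2 := stdNormalCDF_tendsto_atTop.comp (hargs (r - 1/2))
    have := ((tendsto_const_nhds (x := K * Real.exp z)).mul h1).sub
      ((((tendsto_const_nhds (x := K)).mul hexp)).mul h2)
    simp only [Function.comp] at this
    refine Tendsto.congr (fun t => ?_) (by simpa using this)
    rw [hω]; ring
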